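/- Let u⁻, u⁺ : [0,τ) × ℝ^N → ℝ^K be bounded continuous functions, continuously differentiable in t, such that for every x ∈ ℝ^N and t ∈ [0,τ): ∂_t u⁺(t,x) ≥ ∫_{ℝ^N} κ(y−x)[u⁺(t,y) − u⁺(t,x)] dy + A(t,x) u⁺(t,x) componentwise, and ∂_t u⁻(t,x) ≤ ∫_{ℝ^N} κ(y−x)[u⁻(t,y) − u⁻(t,x)] dy + A(t,x) u⁻(t,x) componentwise. If u⁻(0,x) ≤ u⁺(0,x) componentwise for all x ∈ ℝ^N, then u⁻(t,x) ≤ u⁺(t,x) componentwise for all t ∈ [0,τ) and x ∈ ℝ^N. -/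

import Mathlib

open MeasureTheory Set

theorem auxBoundA (N K : ℕ) (T : ℝ) (hT : 0 < T)
    (p : Fin N → ℝ) (hp : ∀ l, 0 < p l)
    (A : ℝ → EuclideanSpace ℝ (Fin N) → Matrix (Fin K) (Fin K) ℝ)
    (hAcont : ∀ k j, Continuous (fun q : ℝ × EuclideanSpace ℝ (Fin N) => A q.1 q.2 k j))
    (hAper : ∀ t x, A (t + T) x = A t x)
    (hAsper : ∀ t x l, A t (x + EuclideanSpace.single l (p l)) = A t x) :
    ∃ C : ℝ, 0 ≤ C ∧ ∀ t x k j, |A t x k j| ≤ C := by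
  have htper : ∀ (n : ℤ) (t : ℝ) x, A (t + n * T) x = A t x := by
    intro n
    induction n using Int.induction_on with
    | zero => simp
    | succ i ih =>
      intro t x
      have h0 : t + (((i:ℤ) + 1 : ℤ) : ℝ) * T = (t + ((i:ℤ) : ℝ) * T) + T := by
        push_cast; ring
      rw [h0, hAper]; exact ih t x
    | pred i ih =>
      intro t x
      have h1 : (t + ((-(i:ℤ) - 1 : ℤ) : ℝ) * T) + T = t + ((-(i:ℤ) : ℤ) : ℝ) * T := by
        push_cast; ring
      have h2 := hAper (t + ((-(i:ℤ) - 1 : ℤ) : ℝ) * T) x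
      rw [h1] at h2
      rw [← h2]; exact ih t x
  have hxper : ∀ (n : ℤ) (t : ℝ) x (l : Fin N),
      A t (x + ((n : ℤ) : ℝ) • EuclideanSpace.single l (p l)) = A t x := by
    intro n
    induction n using Int.induction_on with
    | zero => simp
    | succ i ih =>
      intro t x l
      have h0 : x + (((i:ℤ) + 1 : ℤ) : ℝ) • EuclideanSpace.single l (p l)
          = (x + ((i:ℤ) : ℝ) • EuclideanSpace.single l (p l)) + EuclideanSpace.single l (p l) := by
        push_cast; rw [add_smul, one_smul]; abel
      rw [h0, hAsper]; exact ih t x l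
    | pred i ih =>
      intro t x l
      have h1 : (x + ((-(i:ℤ) - 1 : ℤ) : ℝ) • EuclideanSpace.single l (p l)) + EuclideanSpace.single l (p l)
          = x + ((-(i:ℤ) : ℤ) : ℝ) • EuclideanSpace.single l (p l) := by
        push_cast; rw [sub_smul, neg_smul, one_smul]; abel
      have h2 := hAsper t (x + ((-(i:ℤ) - 1 : ℤ) : ℝ) • EuclideanSpace.single l (p l)) l
      rw [h1] at h2
      rw [← h2]; exact ih t x l
  have hxred : ∀ x : EuclideanSpace ℝ (Fin N),
      ∃ x' : EuclideanSpace ℝ (Fin N), (∀ l, x' l ∈ Icc 0 (p l)) ∧ ∀ t, A t x = A t x' := by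
    intro x
    have main : ∀ s : Finset (Fin N), ∀ x : EuclideanSpace ℝ (Fin N),
        ∃ x' : EuclideanSpace ℝ (Fin N), (∀ l ∈ s, x' l ∈ Icc 0 (p l)) ∧ ∀ t, A t x = A t x' := by
      intro s
      induction s using Finset.induction_on with
      | empty => intro x; exact ⟨x, by simp, fun t => rfl⟩
      | @insert a s ha ih =>
        intro x
        obtain ⟨x', h1, h3⟩ := ih x
        set m : ℤ := ⌊x' a / p a⌋ with hm
        set r : ℝ := p a * Int.fract (x' a / p a) with hr
        set x'' : EuclideanSpace ℝ (Fin N) := WithLp.toLp 2 (Function.update x'.ofLp a r) with hx''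
        refine ⟨x'', ?_, ?_⟩
        · intro l hl
          rcases Finset.mem_insert.mp hl with h | h
          · rw [hx'', h, PiLp.toLp_apply, Function.update_self]
            constructor
            · exact mul_nonneg (hp a).le (Int.fract_nonneg _)
            · rw [hr]
              calc p a * Int.fract (x' a / p a) ≤ p a * 1 :=
                    mul_le_mul_of_nonneg_left (Int.fract_lt_one _).le (hp a).le
                _ = p a := mul_one _
          · rw [hx'', PiLp.toLp_apply, Function.update_of_ne (by rintro rfl; exact ha h)]
            exact h1 l h
        · intro t
          have key : x' = x'' + ((m : ℤ) : ℝ) • EuclideanSpace.single a (p a) := by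
            ext l
            show x' l = Function.update x'.ofLp a r l + ((m:ℤ):ℝ) * (EuclideanSpace.single a (p a) l)
            rcases eq_or_ne l a with rfl | hla
            · rw [Function.update_self, EuclideanSpace.single_apply, if_pos rfl, hr, hm]
              have h := Int.fract_add_floor (x' l / p l)
              have hpl : p l ≠ 0 := (hp l).ne'
              have heq : p l * Int.fract (x' l / p l) + (⌊x' l / p l⌋ : ℝ) * p l
                  = p l * (Int.fract (x' l / p l) + (⌊x' l / p l⌋ : ℝ)) := by ring
              rw [heq, h, mul_div_cancel₀ _ hpl]
            · rw [Function.update_of_ne hla, EuclideanSpace.single_apply, if_neg hla, mul_zero, add_zero]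
          rw [h3, key, hxper]
    obtain ⟨x', h1, h3⟩ := main Finset.univ x
    exact ⟨x', fun l => h1 l (Finset.mem_univ l), h3⟩
  set R : ℝ := Real.sqrt (∑ l, (p l)^2) with hR
  set S : Set (ℝ × EuclideanSpace ℝ (Fin N)) := Icc 0 T ×ˢ Metric.closedBall 0 R with hS
  have hScomp : IsCompact S := (isCompact_Icc).prod (isCompact_closedBall _ _)
  set g : ℝ × EuclideanSpace ℝ (Fin N) → ℝ := fun q => ∑ k, ∑ j, |A q.1 q.2 k j| with hg
  have hgcont : Continuous g := by
    apply continuous_finset_sum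
    intro k _
    apply continuous_finset_sum
    intro j _
    exact (hAcont k j).abs
  obtain ⟨C, hC⟩ := hScomp.exists_bound_of_continuousOn hgcont.continuousOn
  have hS0 : ((0:ℝ), (0:EuclideanSpace ℝ (Fin N))) ∈ S := by
    constructor
    · exact ⟨le_refl 0, hT.le⟩
    · exact Metric.mem_closedBall_self (by rw [hR]; positivity)
  refine ⟨C, le_trans (norm_nonneg _) (hC _ hS0), ?_⟩
  intro t x k j
  set t' : ℝ := T * Int.fract (t / T) with ht'
  have htred : A t x = A t' x := by
    have heq : t = t' + ((⌊t / T⌋ : ℤ) : ℝ) * T := by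
      rw [ht']
      have h := Int.fract_add_floor (t / T)
      have hTne : T ≠ 0 := hT.ne'
      have h9 : T * Int.fract (t / T) + (⌊t / T⌋ : ℝ) * T
          = T * (Int.fract (t / T) + (⌊t / T⌋ : ℝ)) := by ring
      rw [h9, h, mul_div_cancel₀ _ hTne]
    conv_lhs => rw [heq]
    rw [htper]
  have ht'mem : t' ∈ Icc (0:ℝ) T := by
    constructor
    · exact mul_nonneg hT.le (Int.fract_nonneg _)
    · calc T * Int.fract (t / T) ≤ T * 1 :=
          mul_le_mul_of_nonneg_left (Int.fract_lt_one _).le hT.le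
        _ = T := mul_one _
  obtain ⟨x', hx'1, hx'2⟩ := hxred x
  have hx'mem : x' ∈ Metric.closedBall (0 : EuclideanSpace ℝ (Fin N)) R := by
    rw [Metric.mem_closedBall, dist_zero_right, EuclideanSpace.norm_eq, hR]
    apply Real.sqrt_le_sqrt
    apply Finset.sum_le_sum
    intro l _
    rw [Real.norm_eq_abs, sq_abs]
    have h := hx'1 l
    exact sq_le_sq' (by linarith [h.1, (hp l).le]) h.2
  have hfin : |A t' x' k j| ≤ g (t', x') := by
    calc |A t' x' k j| ≤ ∑ j', |A t' x' k j'| :=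
          Finset.single_le_sum (f := fun j' => |A t' x' k j'|) (fun j' _ => abs_nonneg _) (Finset.mem_univ j)
      _ ≤ ∑ k', ∑ j', |A t' x' k' j'| :=
          Finset.single_le_sum (f := fun k' => ∑ j', |A t' x' k' j'|)
            (fun k' _ => Finset.sum_nonneg fun j' _ => abs_nonneg _) (Finset.mem_univ k)
  rw [htred, hx'2 t']
  exact le_trans hfin (le_trans (le_abs_self _) (hC (t', x') ⟨ht'mem, hx'mem⟩))

set_option maxHeartbeats 1000000 in
/-- Comparison principle for the time and space periodic
cooperative nonlocal dispersal system on `ℝ^N`: a bounded subsolution that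
starts below a bounded supersolution stays below it on `[0,τ) × ℝ^N`. -/
theorem stmt5
    (N K : ℕ) (hN : 1 ≤ N) (hK : 2 ≤ K) (T τ : ℝ) (hT : 0 < T) (hτ : 0 < τ)
    (p : Fin N → ℝ) (hp : ∀ l, 0 < p l)
    (κ : EuclideanSpace ℝ (Fin N) → ℝ)
    (hκC : ContDiff ℝ 1 κ) (hκsupp : HasCompactSupport κ)
    (hκnn : ∀ z, 0 ≤ κ z) (hκ0 : 0 < κ 0)
    (hκint : ∫ z, κ z = 1)
    (A : ℝ → EuclideanSpace ℝ (Fin N) → Matrix (Fin K) (Fin K) ℝ)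
    (hAcont : ∀ k j, Continuous (fun q : ℝ × EuclideanSpace ℝ (Fin N) => A q.1 q.2 k j))
    (hAper : ∀ t x, A (t + T) x = A t x)
    (hAsper : ∀ t x l, A t (x + EuclideanSpace.single l (p l)) = A t x)
    (hAcoop : ∀ t x, ∀ k j : Fin K, k ≠ j → 0 ≤ A t x k j)
    (hAirr : ∀ S : Set (Fin K), S.Nonempty → Sᶜ.Nonempty → ∀ t x,
      ∃ k ∈ S, ∃ j ∈ Sᶜ, A t x k j ≠ 0)
    (uP uM duP duM : ℝ → EuclideanSpace ℝ (Fin N) → Fin K → ℝ)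
    -- `u⁺`, `u⁻` are bounded on `[0,τ) × ℝ^N`
    (hbdd : ∃ M : ℝ, ∀ t ∈ Ico (0:ℝ) τ, ∀ x, ∀ k,
      |uP t x k| ≤ M ∧ |uM t x k| ≤ M)
    -- `u⁺`, `u⁻` are continuous on `[0,τ) × ℝ^N`
    (hcontP : ContinuousOn (fun q : ℝ × EuclideanSpace ℝ (Fin N) => uP q.1 q.2)
      (Ico 0 τ ×ˢ univ))
    (hcontM : ContinuousOn (fun q : ℝ × EuclideanSpace ℝ (Fin N) => uM q.1 q.2)
      (Ico 0 τ ×ˢ univ))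
    -- `u⁺`, `u⁻` are continuously differentiable in `t`, with derivatives `du⁺`, `du⁻`
    (hdP : ∀ x, ∀ t ∈ Ico (0:ℝ) τ, ∀ k,
      HasDerivWithinAt (fun s => uP s x k) (duP t x k) (Ico 0 τ) t)
    (hdM : ∀ x, ∀ t ∈ Ico (0:ℝ) τ, ∀ k,
      HasDerivWithinAt (fun s => uM s x k) (duM t x k) (Ico 0 τ) t)
    (hdcP : ∀ x k, ContinuousOn (fun t => duP t x k) (Ico 0 τ))
    (hdcM : ∀ x k, ContinuousOn (fun t => duM t x k) (Ico 0 τ))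
    -- supersolution inequality
    (hsuper : ∀ t ∈ Ico (0:ℝ) τ, ∀ x, ∀ k,
      (∫ y, κ (y - x) * (uP t y k - uP t x k)) + ∑ j, A t x k j * uP t x j
        ≤ duP t x k)
    -- subsolution inequality
    (hsub : ∀ t ∈ Ico (0:ℝ) τ, ∀ x, ∀ k,
      duM t x k ≤ (∫ y, κ (y - x) * (uM t y k - uM t x k))
        + ∑ j, A t x k j * uM t x j)
    -- ordering at time 0
    (hinit : ∀ x, ∀ k, uM 0 x k ≤ uP 0 x k) :
    ∀ t ∈ Ico (0:ℝ) τ, ∀ x, ∀ k, uM t x k ≤ uP t x k := by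
  obtain ⟨C, hC0, hCb⟩ := auxBoundA N K T hT p hp A hAcont hAper hAsper
  obtain ⟨M, hM⟩ := hbdd
  have hk0 : 0 < K := by omega
  have hM0 : 0 ≤ M :=
    le_trans (abs_nonneg _) (hM 0 ⟨le_refl 0, hτ⟩ 0 ⟨0, hk0⟩).1
  set Λ : ℝ := 1 + C * K + 2 * C with hΛ
  have hΛ0 : 0 ≤ Λ := by rw [hΛ]; positivity
  -- continuity in space
  have hcP : ∀ t ∈ Ico (0:ℝ) τ, ∀ k, Continuous (fun y : EuclideanSpace ℝ (Fin N) => uP t y k) := by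
    intro t ht k
    have h1 : ContinuousOn ((fun q : ℝ × EuclideanSpace ℝ (Fin N) => uP q.1 q.2) ∘
        (fun y : EuclideanSpace ℝ (Fin N) => (t, y))) univ :=
      hcontP.comp ((continuous_const.prodMk continuous_id).continuousOn)
        (fun y _ => ⟨ht, mem_univ y⟩)
    have h2 : Continuous (fun y : EuclideanSpace ℝ (Fin N) => uP t y) := by
      rw [← continuousOn_univ]; exact h1
    exact (continuous_apply k).comp h2
  have hcM : ∀ t ∈ Ico (0:ℝ) τ, ∀ k, Continuous (fun y : EuclideanSpace ℝ (Fin N) => uM t y k) := by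
    intro t ht k
    have h1 : ContinuousOn ((fun q : ℝ × EuclideanSpace ℝ (Fin N) => uM q.1 q.2) ∘
        (fun y : EuclideanSpace ℝ (Fin N) => (t, y))) univ :=
      hcontM.comp ((continuous_const.prodMk continuous_id).continuousOn)
        (fun y _ => ⟨ht, mem_univ y⟩)
    have h2 : Continuous (fun y : EuclideanSpace ℝ (Fin N) => uM t y) := by
      rw [← continuousOn_univ]; exact h1
    exact (continuous_apply k).comp h2
  -- integrability of kernel products
  have hker : ∀ (x : EuclideanSpace ℝ (Fin N)) (h : EuclideanSpace ℝ (Fin N) → ℝ),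
      Continuous h → Integrable (fun y => κ (y - x) * h y) := by
    intro x h hh
    have hc : Continuous (fun y => κ (y - x) * h y) :=
      (hκC.continuous.comp (continuous_id.sub continuous_const)).mul hh
    apply hc.integrable_of_hasCompactSupport
    apply HasCompactSupport.mul_right
    exact hκsupp.comp_homeomorph (Homeomorph.subRight x)
  have hκone : ∀ x : EuclideanSpace ℝ (Fin N), ∫ y, κ (y - x) = 1 := by
    intro x
    rw [integral_sub_right_eq_self κ x, hκint]
  -- the main induction
  have key : ∀ n : ℕ, ∀ t ∈ Ico (0:ℝ) τ, ∀ x k,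
      uM t x k - uP t x k ≤ 2 * M * Λ ^ n * t ^ n / (Nat.factorial n) := by
    intro n
    induction n with
    | zero =>
      intro t ht x k
      have h1 := (hM t ht x k).1
      have h2 := (hM t ht x k).2
      have h3 := abs_le.mp h1
      have h4 := abs_le.mp h2
      simp only [pow_zero, Nat.factorial_zero, Nat.cast_one, mul_one, div_one]
      linarith
    | succ n ih =>
      intro t ht x k
      set D2 : ℝ := 2 * M * Λ ^ n / (Nat.factorial n) with hD2
      have hD20 : 0 ≤ D2 := by rw [hD2]; positivity
      have hIH : ∀ s ∈ Ico (0:ℝ) τ, ∀ y j, uM s y j - uP s y j ≤ D2 * s ^ n := by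
        intro s hs y j
        have h := ih s hs y j
        have heq : 2 * M * Λ ^ n * s ^ n / (Nat.factorial n) = D2 * s ^ n := by
          rw [hD2]; ring
        linarith [heq ▸ h]
      set c1 : ℝ := C + 1 with hc1
      have hc10 : 0 < c1 := by rw [hc1]; linarith
      set Q : ℝ := Real.exp (c1 * t) * (Λ * D2) with hQ
      set f : ℝ → ℝ := fun s => uP s x k - uM s x k with hf
      set F : ℝ → ℝ := fun s => Real.exp (c1 * s) * f s + Q / (n + 1) * s ^ (n + 1) with hF
      have hIcc : Icc (0:ℝ) t ⊆ Ico 0 τ := fun s hs => ⟨hs.1, lt_of_le_of_lt hs.2 ht.2⟩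
      have ht0 : 0 ≤ t := ht.1
      -- continuity of F on Icc 0 t
      have hfc : ContinuousOn f (Ico 0 τ) := by
        intro s hs
        exact ((hdP x s hs k).sub (hdM x s hs k)).continuousWithinAt
      have hFc : ContinuousOn F (Icc 0 t) := by
        apply ContinuousOn.add
        · exact ((Real.continuous_exp.comp (continuous_const.mul continuous_id)).continuousOn).mul
            (hfc.mono hIcc)
        · exact (continuous_const.mul (continuous_pow (n+1))).continuousOn
      -- derivative of F at interior points and its nonnegativity
      have hderiv : ∀ s ∈ Ioo (0:ℝ) t,
          HasDerivAt F (Real.exp (c1 * s) * c1 * f s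
            + Real.exp (c1 * s) * (duP s x k - duM s x k)
            + Q / (n + 1) * ((n + 1 : ℕ) * s ^ n)) s := by
        intro s hs
        have hs' : s ∈ Ico (0:ℝ) τ := hIcc ⟨hs.1.le, hs.2.le⟩
        have hnhds : Ico (0:ℝ) τ ∈ nhds s := Ico_mem_nhds hs.1 hs'.2
        have hdf : HasDerivAt f (duP s x k - duM s x k) s :=
          (((hdP x s hs' k).sub (hdM x s hs' k)).hasDerivAt hnhds)
        have hlin : HasDerivAt (fun s : ℝ => c1 * s) c1 s := by
          simpa using (hasDerivAt_id s).const_mul c1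
        have hexp : HasDerivAt (fun s : ℝ => Real.exp (c1 * s)) (Real.exp (c1 * s) * c1) s :=
          hlin.exp
        have h2 := hexp.mul hdf
        have h3 : HasDerivAt (fun s : ℝ => Q / (n + 1) * s ^ (n + 1))
            (Q / (n + 1) * ((n + 1 : ℕ) * s ^ n)) s := by
          simpa using (hasDerivAt_pow (n+1) s).const_mul (Q / (n + 1))
        exact h2.add h3
      have hderiv_nonneg : ∀ s ∈ Ioo (0:ℝ) t,
          0 ≤ Real.exp (c1 * s) * c1 * f s
            + Real.exp (c1 * s) * (duP s x k - duM s x k)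
            + Q / (n + 1) * ((n + 1 : ℕ) * s ^ n) := by
        intro s hs
        have hs' : s ∈ Ico (0:ℝ) τ := hIcc ⟨hs.1.le, hs.2.le⟩
        set Bs : ℝ := D2 * s ^ n with hBs
        have hsn0 : 0 ≤ s ^ n := pow_nonneg hs.1.le n
        have hBs0 : 0 ≤ Bs := mul_nonneg hD20 hsn0
        -- integrability
        have i1 : Integrable (fun y => κ (y - x) * (uP s y k - uP s x k)) :=
          hker x _ ((hcP s hs' k).sub continuous_const)
        have i2 : Integrable (fun y => κ (y - x) * (uM s y k - uM s x k)) :=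
          hker x _ ((hcM s hs' k).sub continuous_const)
        have i3 : Integrable (fun y => κ (y - x) * (uP s y k - uM s y k)) :=
          hker x _ ((hcP s hs' k).sub (hcM s hs' k))
        have i4 : Integrable (fun y => κ (y - x) * (uP s x k - uM s x k)) :=
          hker x _ continuous_const
        have i5 : Integrable (fun y => κ (y - x) * (-Bs)) :=
          hker x _ continuous_const
        -- the difference of the two kernel integrals
        have IPM : (∫ y, κ (y - x) * (uP s y k - uP s x k))
            - (∫ y, κ (y - x) * (uM s y k - uM s x k))
            = (∫ y, κ (y - x) * (uP s y k - uM s y k)) - f s := by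
          rw [← integral_sub i1 i2]
          have heq : (fun y => κ (y - x) * (uP s y k - uP s x k)
              - κ (y - x) * (uM s y k - uM s x k))
              = fun y => κ (y - x) * (uP s y k - uM s y k)
                - κ (y - x) * (uP s x k - uM s x k) := by
            funext y; ring
          rw [heq, integral_sub i3 i4]
          have h4 : (∫ y, κ (y - x) * (uP s x k - uM s x k)) = f s := by
            rw [integral_mul_const, hκone, one_mul]
          rw [h4]
        -- lower bound for the kernel integral
        have hIge : -Bs ≤ ∫ y, κ (y - x) * (uP s y k - uM s y k) := by
          have hpt : ∀ y, κ (y - x) * (-Bs) ≤ κ (y - x) * (uP s y k - uM s y k) := by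
            intro y
            apply mul_le_mul_of_nonneg_left _ (hκnn _)
            have h := hIH s hs' y k
            linarith
          have hmono := integral_mono i5 i3 hpt
          have h5 : (∫ y, κ (y - x) * (-Bs)) = -Bs := by
            rw [integral_mul_const, hκone, one_mul]
          linarith [h5 ▸ hmono]
        -- lower bound for the coupling sum
        have hsumb : A s x k k * f s - C * K * Bs
            ≤ ∑ j, A s x k j * (uP s x j - uM s x j) := by
          have hsplit : ∑ j, A s x k j * (uP s x j - uM s x j)
              = A s x k k * (uP s x k - uM s x k)
                + ∑ j ∈ Finset.univ.erase k, A s x k j * (uP s x j - uM s x j) :=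
            (Finset.add_sum_erase _ _ (Finset.mem_univ k)).symm
          have hterm : ∀ j ∈ Finset.univ.erase k,
              -(C * Bs) ≤ A s x k j * (uP s x j - uM s x j) := by
            intro j hj
            have hj' : j ≠ k := (Finset.mem_erase.mp hj).1
            have hA0 : 0 ≤ A s x k j := hAcoop s x k j (Ne.symm hj')
            have hAC : A s x k j ≤ C := le_trans (le_abs_self _) (hCb s x k j)
            have hw : -Bs ≤ uP s x j - uM s x j := by linarith [hIH s hs' x j]
            nlinarith
          have hsum2 : ∑ j ∈ Finset.univ.erase k, (-(C * Bs))
              ≤ ∑ j ∈ Finset.univ.erase k, A s x k j * (uP s x j - uM s x j) :=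
            Finset.sum_le_sum hterm
          have hcard : ((Finset.univ.erase k).card : ℝ) ≤ K := by
            have := Finset.card_erase_le (a := k) (s := (Finset.univ : Finset (Fin K)))
            have h6 : (Finset.univ : Finset (Fin K)).card = K := by simp
            exact_mod_cast le_trans this (le_of_eq h6)
          have hconst : ∑ j ∈ Finset.univ.erase k, (-(C * Bs))
              = ((Finset.univ.erase k).card : ℝ) * (-(C * Bs)) := by
            rw [Finset.sum_const, nsmul_eq_mul]
          have hCBs : 0 ≤ C * Bs := mul_nonneg hC0 hBs0
          have h7 : -(C * (K:ℝ) * Bs) ≤ ((Finset.univ.erase k).card : ℝ) * (-(C * Bs)) := by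
            have e := mul_nonneg (by linarith [hcard] : (0:ℝ) ≤ (K:ℝ) - ((Finset.univ.erase k).card : ℝ)) hCBs
            nlinarith [e]
          rw [hsplit]
          have hfseq : uP s x k - uM s x k = f s := rfl
          rw [hfseq]
          linarith [hconst ▸ hsum2]
        -- differential inequality
        have hdiff : -Bs - f s + A s x k k * f s - C * K * Bs
            ≤ duP s x k - duM s x k := by
          have h8 := hsuper s hs' x k
          have h9 := hsub s hs' x k
          have h10 : ∑ j, A s x k j * uP s x j - ∑ j, A s x k j * uM s x j
              = ∑ j, A s x k j * (uP s x j - uM s x j) := by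
            rw [← Finset.sum_sub_distrib]
            congr 1; funext j; ring
          have hfseq : uP s x k - uM s x k = f s := rfl
          linarith [IPM, hIge, hsumb, h8, h9, h10]
        -- f-term bound
        have hakk := abs_le.mp (hCb s x k k)
        have hfl : -Bs ≤ f s := by
          have := hIH s hs' x k
          show -Bs ≤ uP s x k - uM s x k
          linarith
        have hterm2 : -(2 * C * Bs) ≤ (C + A s x k k) * f s := by
          rcases le_or_gt 0 (f s) with h | h
          · have e1 := mul_nonneg (by linarith [hakk.1] : (0:ℝ) ≤ C + A s x k k) h
            have e2 := mul_nonneg hC0 hBs0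
            linarith
          · have e1 : (0:ℝ) ≤ (2 * C - (C + A s x k k)) * (-(f s)) :=
              mul_nonneg (by linarith [hakk.2]) (by linarith)
            have e2 : (0:ℝ) ≤ 2 * C * (f s + Bs) :=
              mul_nonneg (by linarith) (by linarith [hfl])
            nlinarith [e1, e2]
        -- combine
        have hmain : -(Λ * Bs) ≤ c1 * f s + (duP s x k - duM s x k) := by
          rw [hΛ, hc1]
          nlinarith [hdiff, hterm2]

        have hexps : Real.exp (c1 * s) ≤ Real.exp (c1 * t) :=
          Real.exp_le_exp.mpr (mul_le_mul_of_nonneg_left hs.2.le hc10.le)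
        have hexpp : 0 < Real.exp (c1 * s) := Real.exp_pos _
        have hQn : Q / (n + 1) * ((n + 1 : ℕ) * s ^ n) = Real.exp (c1 * t) * (Λ * Bs) := by
          rw [hQ, hBs]
          have hn1 : ((n:ℝ) + 1) ≠ 0 := by positivity
          push_cast
          field_simp
        rw [hQn]
        have hΛBs : 0 ≤ Λ * Bs := mul_nonneg hΛ0 hBs0
        have h11 : Real.exp (c1 * s) * c1 * f s + Real.exp (c1 * s) * (duP s x k - duM s x k)
            = Real.exp (c1 * s) * (c1 * f s + (duP s x k - duM s x k)) := by ring
        rw [h11]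
        have h12 : Real.exp (c1 * s) * (c1 * f s + (duP s x k - duM s x k))
            ≥ Real.exp (c1 * s) * (-(Λ * Bs)) :=
          mul_le_mul_of_nonneg_left hmain hexpp.le
        have h13 : Real.exp (c1 * s) * (-(Λ * Bs)) ≥ Real.exp (c1 * t) * (-(Λ * Bs)) := by
          have e := mul_le_mul_of_nonneg_right hexps hΛBs
          linarith
        linarith
      -- monotonicity of F on [0, t]
      have hmono : MonotoneOn F (Icc 0 t) := by
        apply monotoneOn_of_deriv_nonneg (convex_Icc 0 t) hFc
        · intro s hs
          rw [interior_Icc] at hs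
          exact (hderiv s hs).differentiableAt.differentiableWithinAt
        · intro s hs
          rw [interior_Icc] at hs
          rw [(hderiv s hs).deriv]
          exact hderiv_nonneg s hs
      have hF0 : 0 ≤ F 0 := by
        have h14 : F 0 = f 0 := by
          rw [hF]
          simp [zero_pow (Nat.succ_ne_zero n)]
        rw [h14]
        have := hinit x k
        show (0:ℝ) ≤ uP 0 x k - uM 0 x k
        linarith
      have hFt : F 0 ≤ F t := hmono ⟨le_refl 0, ht0⟩ ⟨ht0, le_refl t⟩ ht0
      have hFt0 : 0 ≤ F t := le_trans hF0 hFt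
      -- unwind
      have hexpt : 0 < Real.exp (c1 * t) := Real.exp_pos _
      have h15 : Real.exp (c1 * t) * (uM t x k - uP t x k)
          ≤ Real.exp (c1 * t) * (Λ * D2 * t ^ (n + 1) / (n + 1)) := by
        have hFtdef : F t = Real.exp (c1 * t) * f t + Q / (n + 1) * t ^ (n + 1) := rfl
        have hfdef : f t = uP t x k - uM t x k := rfl
        have hQdef : Q = Real.exp (c1 * t) * (Λ * D2) := rfl
        have hn1 : ((n:ℝ) + 1) ≠ 0 := by positivity
        rw [hFtdef, hfdef, hQdef] at hFt0
        have hgoal : Real.exp (c1 * t) * (Λ * D2 * t ^ (n + 1) / (n + 1))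
            = Real.exp (c1 * t) * (Λ * D2) / (n + 1) * t ^ (n + 1) := by
          field_simp
        rw [hgoal]
        nlinarith [hFt0]
      have h16 : uM t x k - uP t x k ≤ Λ * D2 * t ^ (n + 1) / (n + 1) :=
        le_of_mul_le_mul_left h15 hexpt
      have h17 : Λ * D2 * t ^ (n + 1) / (n + 1)
          = 2 * M * Λ ^ (n + 1) * t ^ (n + 1) / (Nat.factorial (n + 1)) := by
        rw [hD2, Nat.factorial_succ]
        have hn1 : ((n:ℝ) + 1) ≠ 0 := by positivity
        have hnf : ((Nat.factorial n : ℝ)) ≠ 0 := by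
          exact_mod_cast Nat.factorial_ne_zero n
        push_cast
        field_simp
        ring
      linarith [h17 ▸ h16]
  -- pass to the limit
  intro t ht x k
  have hlim : Filter.Tendsto (fun n : ℕ => 2 * M * Λ ^ n * t ^ n / (Nat.factorial n))
      Filter.atTop (nhds 0) := by
    have h := FloorSemiring.tendsto_pow_div_factorial_atTop (Λ * t)
    have h2 := h.const_mul (2 * M)
    rw [mul_zero] at h2
    have heq : (fun n : ℕ => 2 * M * Λ ^ n * t ^ n / (Nat.factorial n))
        = fun n : ℕ => 2 * M * ((Λ * t) ^ n / (Nat.factorial n)) := by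
      funext n; rw [mul_pow]; ring
    rw [heq]
    exact h2
  have hle : uM t x k - uP t x k ≤ 0 :=
    ge_of_tendsto' hlim (fun n => key n t ht x k)
  linarith
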